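/- Let P be the five-element poset {{1}, {−1}, U, L, Φ} with cover relations {1},{−1} < U, {1},{−1} < L, and U, L < Φ, and let ν(X) = |X⁻¹(U)| + |X⁻¹(L)| + 2|X⁻¹(Φ)| for X ∈ Pⁿ. For X ∈ 𝒫ₙ, the space B(X) = {z ∈ 𝔹ⁿ : z_α ∈ Δ(X(α)) for all α, and (z_α, z_β) ∈ U × L implies z_α = e^{iπt_α}, z_β = e^{i(πt_β+π)} with 0 ≤ t_β ≤ t_α ≤ 1} is homeomorphic to a closed ball of dimension ν(X). -/

import Mathlib

open Complex Set

noncomputable section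

open scoped Classical

/-- The five elements of the poset `P = {{1}, {−1}, U, L, Φ}` (here `phi` denotes the
whole hyperfield `Φ`). -/
inductive PEl : Type
  | one : PEl
  | negone : PEl
  | U : PEl
  | L : PEl
  | phi : PEl
  deriving DecidableEq

/-- The subset of the closed unit disk `𝔹 ⊂ ℂ` with which `Δ(X(α))` is identified:
`Δ({1}) = {1}`, `Δ({−1}) = {−1}`, `Δ(U)` the upper half-circle, `Δ(L)` the lower
half-circle, and `Δ(Φ) = 𝔹`. -/
def DeltaSet : PEl → Set ℂ
  | .one => {1}
  | .negone => {-1}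
  | .U => {z | ‖z‖ = 1 ∧ 0 ≤ z.im}
  | .L => {z | ‖z‖ = 1 ∧ z.im ≤ 0}
  | .phi => Metric.closedBall 0 1

/-- `ν(X) = |X⁻¹(U)| + |X⁻¹(L)| + 2 |X⁻¹(Φ)|`. -/
def nu {n : ℕ} (X : Fin n → PEl) : ℕ :=
  (Finset.univ.filter fun α => X α = PEl.U).card +
  (Finset.univ.filter fun α => X α = PEl.L).card +
  2 * (Finset.univ.filter fun α => X α = PEl.phi).card

/-- Membership in `𝒫ₙ ⊂ Pⁿ` (indices `Fin (n+1)`, last index playing the role of `n`):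
`X(α) = {1}` iff `α = n`; some `α ∈ [n−1]` has `X(α) ∈ {{−1}, U, L}`; and whenever
`X(α) ∈ {U, L}` there is `β ∈ [n−1] \ {α}` with `X(β) ∈ {U, L, {−1}}` and
`X(β) ≠ X(α)`. -/
def memPn {n : ℕ} (X : Fin (n + 1) → PEl) : Prop :=
  (∀ α, X α = PEl.one ↔ α = Fin.last n) ∧
  (∃ α, α ≠ Fin.last n ∧ (X α = PEl.negone ∨ X α = PEl.U ∨ X α = PEl.L)) ∧
  (∀ α, (X α = PEl.U ∨ X α = PEl.L) →
    ∃ β, β ≠ α ∧ β ≠ Fin.last n ∧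
      (X β = PEl.U ∨ X β = PEl.L ∨ X β = PEl.negone) ∧ X β ≠ X α)

/-- The space `B(X) ⊆ 𝔹ⁿ`. -/
def BX {n : ℕ} (X : Fin (n + 1) → PEl) : Set (Fin (n + 1) → ℂ) :=
  {z | (∀ α, z α ∈ DeltaSet (X α)) ∧
    ∀ α β, X α = PEl.U → X β = PEl.L →
      ∃ tα tβ : ℝ, 0 ≤ tβ ∧ tβ ≤ tα ∧ tα ≤ 1 ∧
        z α = Complex.exp ((Real.pi * tα : ℝ) * Complex.I) ∧
        z β = Complex.exp ((Real.pi * tβ + Real.pi : ℝ) * Complex.I)}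

namespace BXProof

variable {n : ℕ} (X : Fin (n + 1) → PEl)

/-- Index type of cardinality `nu X`. -/
abbrev Idx : Type :=
  ({α : Fin (n + 1) // X α = PEl.phi} × Fin 2) ⊕
    ({α : Fin (n + 1) // X α = PEl.U} ⊕ {α : Fin (n + 1) // X α = PEl.L})

lemma card_Idx : Fintype.card (Idx X) = nu X := by
  simp only [Fintype.card_sum, Fintype.card_prod, Fintype.card_subtype, Fintype.card_fin, nu]
  ring

/-- The model convex body. -/
def CSet : Set (EuclideanSpace ℝ (Idx X)) :=
  {v | (∀ a : {α : Fin (n + 1) // X α = PEl.phi},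
          (v (.inl (a, 0))) ^ 2 + (v (.inl (a, 1))) ^ 2 ≤ 1) ∧
       (∀ u : {α : Fin (n + 1) // X α = PEl.U},
          0 ≤ v (.inr (.inl u)) ∧ v (.inr (.inl u)) ≤ 1) ∧
       (∀ l : {α : Fin (n + 1) // X α = PEl.L},
          0 ≤ v (.inr (.inr l)) ∧ v (.inr (.inr l)) ≤ 1) ∧
       (∀ (u : {α : Fin (n + 1) // X α = PEl.U}) (l : {α : Fin (n + 1) // X α = PEl.L}),
          v (.inr (.inr l)) ≤ v (.inr (.inl u)))}

lemma disk_convex {a b v0 v1 w0 w1 : ℝ} (ha : 0 ≤ a) (hb : 0 ≤ b) (hab : a + b = 1)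
    (hv : v0 ^ 2 + v1 ^ 2 ≤ 1) (hw : w0 ^ 2 + w1 ^ 2 ≤ 1) :
    (a * v0 + b * w0) ^ 2 + (a * v1 + b * w1) ^ 2 ≤ 1 := by
  have key : v0 * w0 + v1 * w1 ≤ 1 := by nlinarith [sq_nonneg (v0 - w0), sq_nonneg (v1 - w1)]
  nlinarith [mul_nonneg ha hb, sq_nonneg a, sq_nonneg b]

lemma convex_CSet : Convex ℝ (CSet X) := by
  rintro v ⟨hv1, hv2, hv3, hv4⟩ w ⟨hw1, hw2, hw3, hw4⟩ a b ha hb hab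
  have hev : ∀ i : Idx X, (a • v + b • w) i = a * v i + b * w i := fun i => rfl
  refine ⟨fun p => ?_, fun u => ?_, fun l => ?_, fun u l => ?_⟩
  · rw [hev, hev]
    exact disk_convex ha hb hab (hv1 p) (hw1 p)
  · rw [hev]
    constructor
    · exact add_nonneg (mul_nonneg ha (hv2 u).1) (mul_nonneg hb (hw2 u).1)
    · nlinarith [(hv2 u).2, (hw2 u).2]
  · rw [hev]
    constructor
    · exact add_nonneg (mul_nonneg ha (hv3 l).1) (mul_nonneg hb (hw3 l).1)
    · nlinarith [(hv3 l).2, (hw3 l).2]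
  · rw [hev, hev]
    have := hv4 u l; have := hw4 u l
    nlinarith

lemma continuous_eval (i : Idx X) : Continuous fun v : EuclideanSpace ℝ (Idx X) => v i :=
  (EuclideanSpace.proj i).continuous

lemma isClosed_CSet : IsClosed (CSet X) := by
  have h1 : IsClosed {v : EuclideanSpace ℝ (Idx X) |
      ∀ a : {α : Fin (n + 1) // X α = PEl.phi},
        (v (.inl (a, 0))) ^ 2 + (v (.inl (a, 1))) ^ 2 ≤ 1} := by
    rw [setOf_forall]
    exact isClosed_iInter fun p => isClosed_le (by fun_prop) continuous_const
  have h2 : IsClosed {v : EuclideanSpace ℝ (Idx X) |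
      ∀ u : {α : Fin (n + 1) // X α = PEl.U},
        0 ≤ v (.inr (.inl u)) ∧ v (.inr (.inl u)) ≤ 1} := by
    rw [setOf_forall]
    exact isClosed_iInter fun u => IsClosed.inter
      (isClosed_le continuous_const (continuous_eval X _))
      (isClosed_le (continuous_eval X _) continuous_const)
  have h3 : IsClosed {v : EuclideanSpace ℝ (Idx X) |
      ∀ l : {α : Fin (n + 1) // X α = PEl.L},
        0 ≤ v (.inr (.inr l)) ∧ v (.inr (.inr l)) ≤ 1} := by
    rw [setOf_forall]
    exact isClosed_iInter fun l => IsClosed.inter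
      (isClosed_le continuous_const (continuous_eval X _))
      (isClosed_le (continuous_eval X _) continuous_const)
  have h4 : IsClosed {v : EuclideanSpace ℝ (Idx X) |
      ∀ (u : {α : Fin (n + 1) // X α = PEl.U}) (l : {α : Fin (n + 1) // X α = PEl.L}),
        v (.inr (.inr l)) ≤ v (.inr (.inl u))} := by
    rw [setOf_forall]
    refine isClosed_iInter fun u => ?_
    rw [setOf_forall]
    exact isClosed_iInter fun l =>
      isClosed_le (continuous_eval X _) (continuous_eval X _)
  have : CSet X = _ ∩ (_ ∩ (_ ∩ _)) := rfl
  exact (h1.inter (h2.inter (h3.inter h4)))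

lemma coord_dist_le (v w : EuclideanSpace ℝ (Idx X)) (i : Idx X) :
    dist (v i) (w i) ≤ dist v w := by
  rw [EuclideanSpace.dist_eq]
  have h0 : dist (v i) (w i) = Real.sqrt (dist (v i) (w i) ^ 2) :=
    (Real.sqrt_sq dist_nonneg).symm
  rw [h0]
  apply Real.sqrt_le_sqrt
  exact Finset.single_le_sum (f := fun j => dist (v j) (w j) ^ 2)
    (fun j _ => sq_nonneg _) (Finset.mem_univ i)

/-- The interior point of `CSet`. -/
def ctr : EuclideanSpace ℝ (Idx X) := WithLp.toLp 2 fun i =>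
  match i with
  | .inl _ => 0
  | .inr (.inl _) => 3 / 4
  | .inr (.inr _) => 1 / 4

lemma ctr_mem_interior : ctr X ∈ interior (CSet X) := by
  rw [mem_interior]
  refine ⟨Metric.ball (ctr X) (1 / 8), ?_, Metric.isOpen_ball, Metric.mem_ball_self (by norm_num)⟩
  intro v hv
  have hd : ∀ i : Idx X, |v i - ctr X i| < 1 / 8 := by
    intro i
    calc |v i - ctr X i| = dist (v i) (ctr X i) := (Real.dist_eq _ _).symm
    _ ≤ dist v (ctr X) := coord_dist_le X v (ctr X) i
    _ < 1 / 8 := hv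
  refine ⟨fun p => ?_, fun u => ?_, fun l => ?_, fun u l => ?_⟩
  · have h0 := hd (.inl (p, 0)); have h1 := hd (.inl (p, 1))
    simp only [ctr, PiLp.toLp_apply, sub_zero] at h0 h1
    have h0' := abs_lt.1 h0
    have h1' := abs_lt.1 h1
    nlinarith [h0'.1, h0'.2, h1'.1, h1'.2]
  · have h := abs_lt.1 (hd (.inr (.inl u)))
    simp only [ctr, PiLp.toLp_apply] at h
    constructor <;> [linarith [h.1]; linarith [h.2]]
  · have h := abs_lt.1 (hd (.inr (.inr l)))
    simp only [ctr, PiLp.toLp_apply] at h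
    constructor <;> [linarith [h.1]; linarith [h.2]]
  · have h1 := abs_lt.1 (hd (.inr (.inl u)))
    have h2 := abs_lt.1 (hd (.inr (.inr l)))
    simp only [ctr, PiLp.toLp_apply] at h1 h2
    linarith [h1.1, h2.2]

lemma isBounded_CSet : Bornology.IsBounded (CSet X) := by
  rw [Metric.isBounded_iff_subset_closedBall 0]
  refine ⟨(Fintype.card (Idx X) : ℝ) + 1, fun v hv => ?_⟩
  obtain ⟨h1, h2, h3, h4⟩ := hv
  have hcoord : ∀ i : Idx X, ‖v i‖ ^ 2 ≤ 1 := by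
    intro i
    rcases i with ⟨p, j⟩ | u | l
    · have hj : j = 0 ∨ j = 1 := by omega
      have := h1 p
      rcases hj with rfl | rfl
      · rw [Real.norm_eq_abs, _root_.sq_abs]
        nlinarith [sq_nonneg (v (.inl (p, 1)))]
      · rw [Real.norm_eq_abs, _root_.sq_abs]
        nlinarith [sq_nonneg (v (.inl (p, 0)))]
    · have := h2 u
      rw [Real.norm_eq_abs, _root_.sq_abs]
      nlinarith [this.1, this.2]
    · have := h3 l
      rw [Real.norm_eq_abs, _root_.sq_abs]
      nlinarith [this.1, this.2]
  rw [Metric.mem_closedBall, dist_zero_right, EuclideanSpace.norm_eq]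
  have hsum : (∑ i, ‖v i‖ ^ 2) ≤ (Fintype.card (Idx X) : ℝ) := by
    calc (∑ i, ‖v i‖ ^ 2) ≤ ∑ _i : Idx X, (1 : ℝ) :=
      Finset.sum_le_sum fun i _ => hcoord i
    _ = (Fintype.card (Idx X) : ℝ) := by simp
  have hc : (0 : ℝ) ≤ (Fintype.card (Idx X) : ℝ) := Nat.cast_nonneg _
  calc Real.sqrt (∑ i, ‖v i‖ ^ 2) ≤ Real.sqrt ((Fintype.card (Idx X) : ℝ)) :=
        Real.sqrt_le_sqrt hsum
    _ ≤ Real.sqrt (((Fintype.card (Idx X) : ℝ) + 1) ^ 2) := by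
        apply Real.sqrt_le_sqrt; nlinarith
    _ = (Fintype.card (Idx X) : ℝ) + 1 := Real.sqrt_sq (by positivity)

/-- The map from `B(X)` coordinates to the model. -/
def toC (z : Fin (n + 1) → ℂ) : EuclideanSpace ℝ (Idx X) := WithLp.toLp 2 fun i =>
  match i with
  | .inl (p, j) => if j = 0 then (z p.1).re else (z p.1).im
  | .inr (.inl u) => Real.arccos ((z u.1).re) / Real.pi
  | .inr (.inr l) => Real.arccos (-(z l.1).re) / Real.pi

/-- The map back. -/
def toB (v : EuclideanSpace ℝ (Idx X)) : Fin (n + 1) → ℂ := fun α =>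
  if h : X α = PEl.phi then ⟨v (.inl (⟨α, h⟩, 0)), v (.inl (⟨α, h⟩, 1))⟩
  else if h : X α = PEl.U then
    Complex.exp ((Real.pi * v (.inr (.inl ⟨α, h⟩)) : ℝ) * Complex.I)
  else if h : X α = PEl.L then
    Complex.exp ((Real.pi * v (.inr (.inr ⟨α, h⟩)) + Real.pi : ℝ) * Complex.I)
  else if X α = PEl.one then 1 else -1

lemma continuous_toC : Continuous (toC X) := by
  have : Continuous fun (z : Fin (n + 1) → ℂ) (i : Idx X) => toC X z i := by
    refine continuous_pi fun i => ?_
    rcases i with ⟨p, j⟩ | u | l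
    · simp only [toC, PiLp.toLp_apply]
      split
      · exact Complex.continuous_re.comp (continuous_apply _)
      · exact Complex.continuous_im.comp (continuous_apply _)
    · exact ((Real.continuous_arccos.comp
        (Complex.continuous_re.comp (continuous_apply _))).div_const _)
    · exact ((Real.continuous_arccos.comp
        ((Complex.continuous_re.comp (continuous_apply _)).neg)).div_const _)
  exact (PiLp.continuous_toLp 2 fun _ : Idx X => ℝ).comp this

lemma continuous_toB : Continuous (toB X) := by
  refine continuous_pi fun α => ?_
  unfold toB
  by_cases h1 : X α = PEl.phi
  · simp only [dif_pos h1]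
    have hc : Continuous fun v : EuclideanSpace ℝ (Idx X) =>
        ((v (.inl (⟨α, h1⟩, 0)) : ℂ) + (v (.inl (⟨α, h1⟩, 1)) : ℂ) * Complex.I) :=
      (Complex.continuous_ofReal.comp (continuous_eval X _)).add
        ((Complex.continuous_ofReal.comp (continuous_eval X _)).mul continuous_const)
    exact hc.congr fun v => (Complex.mk_eq_add_mul_I _ _).symm
  · simp only [dif_neg h1]
    by_cases h2 : X α = PEl.U
    · simp only [dif_pos h2]
      exact Complex.continuous_exp.comp
        ((Complex.continuous_ofReal.comp (continuous_const.mul (continuous_eval X _))).mul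
          continuous_const)
    · simp only [dif_neg h2]
      by_cases h3 : X α = PEl.L
      · simp only [dif_pos h3]
        exact Complex.continuous_exp.comp
          ((Complex.continuous_ofReal.comp
            ((continuous_const.mul (continuous_eval X _)).add continuous_const)).mul
            continuous_const)
      · simp only [dif_neg h3]
        exact continuous_const


lemma toC_mem {z : Fin (n + 1) → ℂ} (hz : z ∈ BX X) : toC X z ∈ CSet X := by
  obtain ⟨hz1, hz2⟩ := hz
  have pi_pos := Real.pi_pos
  refine ⟨fun p => ?_, fun u => ?_, fun l => ?_, fun u l => ?_⟩
  · have hm := hz1 p.1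
    rw [p.2] at hm
    simp only [DeltaSet, Metric.mem_closedBall, dist_zero_right] at hm
    have habs : ‖z p.1‖ ≤ 1 := hm
    have hsq := Complex.sq_norm (z p.1)
    rw [Complex.normSq_apply] at hsq
    have h2 : (z p.1).re ^ 2 + (z p.1).im ^ 2 ≤ 1 := by
      nlinarith [norm_nonneg (z p.1)]
    simpa [toC] using h2
  · simp only [toC]
    exact ⟨div_nonneg (Real.arccos_nonneg _) pi_pos.le,
      (div_le_one pi_pos).mpr (Real.arccos_le_pi _)⟩
  · simp only [toC]
    exact ⟨div_nonneg (Real.arccos_nonneg _) pi_pos.le,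
      (div_le_one pi_pos).mpr (Real.arccos_le_pi _)⟩
  · obtain ⟨tα, tβ, htβ0, htβα, htα1, hα, hβ⟩ := hz2 u.1 l.1 u.2 l.2
    have hru : (z u.1).re = Real.cos (Real.pi * tα) := by
      rw [hα]; exact Complex.exp_ofReal_mul_I_re _
    have hrl : -(z l.1).re = Real.cos (Real.pi * tβ) := by
      rw [hβ, Complex.exp_ofReal_mul_I_re, Real.cos_add_pi, neg_neg]
    have hau : Real.arccos ((z u.1).re) = Real.pi * tα := by
      rw [hru]
      exact Real.arccos_cos (by nlinarith) (by nlinarith)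
    have hal : Real.arccos (-(z l.1).re) = Real.pi * tβ := by
      rw [hrl]
      exact Real.arccos_cos (by nlinarith) (by nlinarith)
    simp only [toC, hau, hal]
    rw [mul_div_cancel_left₀ _ Real.pi_ne_zero, mul_div_cancel_left₀ _ Real.pi_ne_zero]
    exact htβα

lemma toB_mem {v : EuclideanSpace ℝ (Idx X)} (hv : v ∈ CSet X) : toB X v ∈ BX X := by
  obtain ⟨h1, h2, h3, h4⟩ := hv
  have pi_pos := Real.pi_pos
  constructor
  · intro α
    by_cases hφ : X α = PEl.phi
    · rw [hφ]
      simp only [toB, dif_pos hφ, DeltaSet, Metric.mem_closedBall, dist_zero_right]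
      have hp := h1 ⟨α, hφ⟩
      show ‖_‖ ≤ 1
      rw [Complex.norm_def, Complex.normSq_mk]
      rw [Real.sqrt_le_one]
      nlinarith
    · by_cases hU : X α = PEl.U
      · rw [hU]
        simp only [toB, dif_neg hφ, dif_pos hU, DeltaSet]
        refine ⟨Complex.norm_exp_ofReal_mul_I _, ?_⟩
        rw [Complex.exp_ofReal_mul_I_im]
        exact Real.sin_nonneg_of_nonneg_of_le_pi
          (by nlinarith [(h2 ⟨α, hU⟩).1]) (by nlinarith [(h2 ⟨α, hU⟩).2])
      · by_cases hL : X α = PEl.L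
        · rw [hL]
          simp only [toB, dif_neg hφ, dif_neg hU, dif_pos hL, DeltaSet]
          refine ⟨Complex.norm_exp_ofReal_mul_I _, ?_⟩
          rw [Complex.exp_ofReal_mul_I_im, Real.sin_add_pi, neg_nonpos]
          exact Real.sin_nonneg_of_nonneg_of_le_pi
            (by nlinarith [(h3 ⟨α, hL⟩).1]) (by nlinarith [(h3 ⟨α, hL⟩).2])
        · by_cases hone : X α = PEl.one
          · rw [hone]
            simp only [toB, dif_neg hφ, dif_neg hU, dif_neg hL, if_pos hone, DeltaSet]
            exact rfl
          · have hneg : X α = PEl.negone := by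
              cases hXα : X α <;> simp_all
            rw [hneg]
            simp only [toB, dif_neg hφ, dif_neg hU, dif_neg hL, if_neg hone, DeltaSet]
            exact rfl
  · intro α β hU hL
    have hφα : ¬ X α = PEl.phi := by simp [hU]
    have hφβ : ¬ X β = PEl.phi := by simp [hL]
    have hUβ : ¬ X β = PEl.U := by simp [hL]
    refine ⟨v (.inr (.inl ⟨α, hU⟩)), v (.inr (.inr ⟨β, hL⟩)),
      (h3 ⟨β, hL⟩).1, h4 ⟨α, hU⟩ ⟨β, hL⟩, (h2 ⟨α, hU⟩).2, ?_, ?_⟩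
    · simp only [toB, dif_neg hφα, dif_pos hU]
    · simp only [toB, dif_neg hφβ, dif_neg hUβ, dif_pos hL]

lemma toB_toC {z : Fin (n + 1) → ℂ} (hz : z ∈ BX X) : toB X (toC X z) = z := by
  obtain ⟨hz1, hz2⟩ := hz
  have pi_pos := Real.pi_pos
  funext α
  by_cases hφ : X α = PEl.phi
  · simp only [toB, dif_pos hφ, toC]
    norm_num
  · by_cases hU : X α = PEl.U
    · have hm := hz1 α
      rw [hU] at hm
      obtain ⟨habs, him⟩ := hm
      have hsq := Complex.sq_norm (z α)
      rw [Complex.normSq_apply, habs] at hsq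
      have hre1 : -1 ≤ (z α).re := by nlinarith
      have hre2 : (z α).re ≤ 1 := by nlinarith
      simp only [toB, dif_neg hφ, dif_pos hU, toC]
      rw [mul_comm Real.pi, div_mul_cancel₀ _ Real.pi_ne_zero]
      apply Complex.ext
      · rw [Complex.exp_ofReal_mul_I_re]
        exact Real.cos_arccos hre1 hre2
      · rw [Complex.exp_ofReal_mul_I_im, Real.sin_arccos]
        rw [show 1 - (z α).re ^ 2 = (z α).im ^ 2 by nlinarith]
        exact Real.sqrt_sq him
    · by_cases hL : X α = PEl.L
      · have hm := hz1 α
        rw [hL] at hm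
        obtain ⟨habs, him⟩ := hm
        have hsq := Complex.sq_norm (z α)
        rw [Complex.normSq_apply, habs] at hsq
        have hre1 : -1 ≤ -(z α).re := by nlinarith
        have hre2 : -(z α).re ≤ 1 := by nlinarith
        simp only [toB, dif_neg hφ, dif_neg hU, dif_pos hL, toC]
        rw [mul_comm Real.pi, div_mul_cancel₀ _ Real.pi_ne_zero]
        apply Complex.ext
        · rw [Complex.exp_ofReal_mul_I_re, Real.cos_add_pi, Real.cos_arccos hre1 hre2, neg_neg]
        · rw [Complex.exp_ofReal_mul_I_im, Real.sin_add_pi, Real.sin_arccos]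
          rw [show 1 - (-(z α).re) ^ 2 = (z α).im ^ 2 by nlinarith]
          rw [Real.sqrt_sq_eq_abs, abs_of_nonpos him, neg_neg]
      · by_cases hone : X α = PEl.one
        · have hm := hz1 α
          rw [hone] at hm
          simp only [toB, dif_neg hφ, dif_neg hU, dif_neg hL, if_pos hone]
          exact (hm : z α = 1).symm
        · have hneg : X α = PEl.negone := by cases hXα : X α <;> simp_all
          have hm := hz1 α
          rw [hneg] at hm
          simp only [toB, dif_neg hφ, dif_neg hU, dif_neg hL, if_neg hone]
          exact (hm : z α = -1).symm

lemma toC_toB {v : EuclideanSpace ℝ (Idx X)} (hv : v ∈ CSet X) : toC X (toB X v) = v := by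
  obtain ⟨h1, h2, h3, h4⟩ := hv
  have pi_pos := Real.pi_pos
  ext i
  rcases i with ⟨p, j⟩ | u | l
  · have hj : j = 0 ∨ j = 1 := by omega
    rcases hj with rfl | rfl <;>
    · simp only [toC, PiLp.toLp_apply, toB, dif_pos p.2]
      norm_num [Subtype.coe_eta]
  · have hu := h2 u
    simp only [toC, PiLp.toLp_apply, toB, dif_neg (show ¬ X u.1 = PEl.phi by simp [u.2]), dif_pos u.2,
      Subtype.coe_eta]
    rw [Complex.exp_ofReal_mul_I_re,
      Real.arccos_cos (by nlinarith [hu.1]) (by nlinarith [hu.2]),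
      mul_div_cancel_left₀ _ Real.pi_ne_zero]
  · have hl := h3 l
    simp only [toC, PiLp.toLp_apply, toB, dif_neg (show ¬ X l.1 = PEl.phi by simp [l.2]),
      dif_neg (show ¬ X l.1 = PEl.U by simp [l.2]), dif_pos l.2, Subtype.coe_eta]
    rw [Complex.exp_ofReal_mul_I_re, Real.cos_add_pi, neg_neg,
      Real.arccos_cos (by nlinarith [hl.1]) (by nlinarith [hl.2]),
      mul_div_cancel_left₀ _ Real.pi_ne_zero]

end BXProof


/-- For `X ∈ 𝒫ₙ`, the space `B(X)` is homeomorphic to a closed ball of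
dimension `ν(X)`. -/
theorem BX_isBall (n : ℕ) (X : Fin (n + 1) → PEl) (hX : memPn X) :
    Nonempty (↥(BX X) ≃ₜ
      ↥(Metric.closedBall (0 : EuclideanSpace ℝ (Fin (nu X))) 1)) := by
  classical
  obtain ⟨h, hint, hcl, hfr⟩ :=
    exists_homeomorph_image_interior_closure_frontier_eq_unitBall
      (BXProof.convex_CSet X) ⟨_, BXProof.ctr_mem_interior X⟩ (BXProof.isBounded_CSet X)
  rw [(BXProof.isClosed_CSet X).closure_eq] at hcl
  let e1 : ↥(BX X) ≃ₜ ↥(BXProof.CSet X) :=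
    { toFun := fun z => ⟨BXProof.toC X z.1, BXProof.toC_mem X z.2⟩
      invFun := fun v => ⟨BXProof.toB X v.1, BXProof.toB_mem X v.2⟩
      left_inv := fun z => Subtype.ext (BXProof.toB_toC X z.2)
      right_inv := fun v => Subtype.ext (BXProof.toC_toB X v.2)
      continuous_toFun :=
        ((BXProof.continuous_toC X).comp continuous_subtype_val).subtype_mk _
      continuous_invFun :=
        ((BXProof.continuous_toB X).comp continuous_subtype_val).subtype_mk _ }
  let e2 : ↥(BXProof.CSet X) ≃ₜ
      ↥(Metric.closedBall (0 : EuclideanSpace ℝ (BXProof.Idx X)) 1) :=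
    (h.image _).trans (Homeomorph.setCongr hcl)
  let eq : BXProof.Idx X ≃ Fin (nu X) := Fintype.equivFinOfCardEq (BXProof.card_Idx X)
  let li : EuclideanSpace ℝ (BXProof.Idx X) ≃ₗᵢ[ℝ] EuclideanSpace ℝ (Fin (nu X)) :=
    LinearIsometryEquiv.piLpCongrLeft 2 ℝ ℝ eq
  have him : ⇑li.toHomeomorph '' Metric.closedBall 0 1 = Metric.closedBall 0 1 := by
    have h0 := li.toIsometryEquiv.image_closedBall 0 1
    simpa using h0
  let e3 : ↥(Metric.closedBall (0 : EuclideanSpace ℝ (BXProof.Idx X)) 1) ≃ₜ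
      ↥(Metric.closedBall (0 : EuclideanSpace ℝ (Fin (nu X))) 1) :=
    (li.toHomeomorph.image _).trans (Homeomorph.setCongr him)
  exact ⟨e1.trans (e2.trans e3)⟩
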